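/- Let Ω ⊂ ℝ^n be a bounded open set satisfying the ρ-reflection property. Then sup_{x ∈ ∂Ω} |x| − inf_{x ∈ ∂Ω} |x| ≤ 4ρ. -/

import Mathlib

open Metric

/-- Reflection across the hyperplane `{x : x·ν = s}` (for a unit vector `ν`). -/
noncomputable def reflectHyp (n : ℕ) (ν : EuclideanSpace ℝ (Fin n)) (s : ℝ)
    (x : EuclideanSpace ℝ (Fin n)) : EuclideanSpace ℝ (Fin n) :=
  x - (2 * ((inner ℝ x ν : ℝ) - s)) • ν

/-- `Ω` satisfies the `ρ`-reflection property: it contains the closed ball `B̄_ρ(0)` and,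
for every unit direction `ν` and every `s > ρ`, the reflection across `{x·ν = s}` of
`Ω ∩ {x·ν > s}` is contained in `Ω ∩ {x·ν < s}`. -/
def RhoReflection (n : ℕ) (ρ : ℝ) (Ω : Set (EuclideanSpace ℝ (Fin n))) : Prop :=
  closedBall (0 : EuclideanSpace ℝ (Fin n)) ρ ⊆ Ω ∧
    ∀ ν : EuclideanSpace ℝ (Fin n), ‖ν‖ = 1 → ∀ s : ℝ, ρ < s →
      reflectHyp n ν s '' (Ω ∩ {x | s < (inner ℝ x ν : ℝ)}) ⊆ Ω ∩ {x | (inner ℝ x ν : ℝ) < s}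

lemma not_mem_of_far {n : ℕ} {ρ : ℝ} (hρ : 0 < ρ) {Ω : Set (EuclideanSpace ℝ (Fin n))}
    (href : RhoReflection n ρ Ω) {y p : EuclideanSpace ℝ (Fin n)}
    (hy : y ∉ Ω) (hp : ‖y‖ + 2 * ρ < ‖p‖) : p ∉ Ω := by
  intro hpΩ
  have hyn : (0:ℝ) ≤ ‖y‖ := norm_nonneg y
  have hne : p ≠ y := by
    intro h; rw [h] at hp; linarith
  have hc : (0:ℝ) < ‖p - y‖ := by
    rw [norm_pos_iff, sub_ne_zero]; exact hne
  set c := ‖p - y‖ with hcdef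
  set ν := c⁻¹ • (p - y) with hνdef
  have hνnorm : ‖ν‖ = 1 := by
    rw [hνdef, norm_smul, norm_inv, Real.norm_eq_abs, abs_of_pos hc, ← hcdef,
      inv_mul_cancel₀ hc.ne']
  have hid : (inner ℝ (p - y) ν : ℝ) = c := by
    rw [hνdef, real_inner_smul_right, real_inner_self_eq_norm_sq, ← hcdef]
    field_simp
  have hsub : (inner ℝ p ν : ℝ) - (inner ℝ y ν : ℝ) = c := by
    rw [← inner_sub_left]; exact hid
  set s := (inner ℝ p ν : ℝ) - c / 2 with hsdef
  -- compute 2 c s = ‖p‖² - ‖y‖²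
  have hkey : 2 * c * s = ‖p‖ ^ 2 - ‖y‖ ^ 2 := by
    have h1 : c * (inner ℝ p ν : ℝ) = (inner ℝ p (p - y) : ℝ) := by
      rw [hνdef, real_inner_smul_right]
      field_simp
    have h2 : c ^ 2 = (inner ℝ (p - y) (p - y) : ℝ) := by
      rw [real_inner_self_eq_norm_sq]
    have h3 : (inner ℝ p (p - y) : ℝ) = ‖p‖ ^ 2 - (inner ℝ p y : ℝ) := by
      rw [inner_sub_right, real_inner_self_eq_norm_sq]
    have h4 : (inner ℝ (p - y) (p - y) : ℝ) = ‖p‖ ^ 2 - 2 * (inner ℝ p y : ℝ) + ‖y‖ ^ 2 := by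
      rw [inner_sub_left, inner_sub_right, inner_sub_right, real_inner_self_eq_norm_sq,
        real_inner_self_eq_norm_sq, real_inner_comm y p]
      ring
    have : 2 * c * s = 2 * (c * (inner ℝ p ν : ℝ)) - c ^ 2 := by rw [hsdef]; ring
    rw [this, h1, h3, ← h2] at *
    rw [h2, h4]
    ring
  have hcle : c ≤ ‖p‖ + ‖y‖ := norm_sub_le p y
  have hs : ρ < s := by nlinarith
  have hmem : p ∈ Ω ∩ {x | s < (inner ℝ x ν : ℝ)} := by
    refine ⟨hpΩ, ?_⟩
    simp only [Set.mem_setOf_eq, hsdef]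
    linarith
  have := href.2 ν hνnorm s hs ⟨p, hmem, rfl⟩
  have hrefl : reflectHyp n ν s p = y := by
    rw [reflectHyp]
    have : (2 * ((inner ℝ p ν : ℝ) - s)) = c := by rw [hsdef]; ring
    rw [this, hνdef, smul_smul, mul_inv_cancel₀ hc.ne', one_smul]
    abel
  rw [hrefl] at this
  exact hy this.1

/-- If a bounded open set `Ω` satisfies `ρ`-reflection, then
`sup_{x ∈ ∂Ω} |x| - inf_{x ∈ ∂Ω} |x| ≤ 4ρ`. -/
theorem rhoReflection_boundary_norm_osc (n : ℕ) (ρ : ℝ) (hρ : 0 < ρ)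
    (Ω : Set (EuclideanSpace ℝ (Fin n)))
    (hopen : IsOpen Ω) (hbdd : Bornology.IsBounded Ω)
    (href : RhoReflection n ρ Ω) :
    sSup ((fun x => ‖x‖) '' frontier Ω) - sInf ((fun x => ‖x‖) '' frontier Ω) ≤ 4 * ρ := by
  set S := (fun x : EuclideanSpace ℝ (Fin n) => ‖x‖) '' frontier Ω with hSdef
  rcases S.eq_empty_or_nonempty with hS | hSne
  · rw [hS, Real.sSup_empty, Real.sInf_empty]; linarith
  -- key claim: any two frontier points have norms within 2ρ
  have claim : ∀ x ∈ frontier Ω, ∀ y ∈ frontier Ω, ‖x‖ ≤ ‖y‖ + 2 * ρ := by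
    intro x hx y hy
    have hyΩ : y ∉ Ω := by
      have := hy.2
      rwa [hopen.interior_eq] at this
    by_contra h
    push_neg at h
    have hxcl : x ∈ closure Ω := hx.1
    rw [Metric.mem_closure_iff] at hxcl
    obtain ⟨z, hzΩ, hz⟩ := hxcl (‖x‖ - ‖y‖ - 2 * ρ) (by linarith)
    have : ‖y‖ + 2 * ρ < ‖z‖ := by
      have h1 : ‖x‖ - ‖z‖ ≤ ‖x - z‖ := norm_sub_norm_le x z
      have h2 : ‖x - z‖ < ‖x‖ - ‖y‖ - 2 * ρ := by rwa [dist_eq_norm] at hz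
      linarith
    exact not_mem_of_far hρ href hyΩ this hzΩ
  have hbf : Bornology.IsBounded (frontier Ω) :=
    hbdd.closure.subset frontier_subset_closure
  obtain ⟨M, hM⟩ := hbf.exists_norm_le
  have hbddS : BddAbove S := ⟨M, by rintro a ⟨x, hx, rfl⟩; exact hM x hx⟩
  have hsup_le : ∀ y ∈ frontier Ω, sSup S ≤ ‖y‖ + 2 * ρ := by
    intro y hy
    refine csSup_le hSne ?_
    rintro a ⟨x, hx, rfl⟩
    exact claim x hx y hy
  have hinf : sSup S - 2 * ρ ≤ sInf S := by
    refine le_csInf hSne ?_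
    rintro a ⟨y, hy, rfl⟩
    linarith [hsup_le y hy]
  linarith
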